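/- Let ν be a probability measure on the positive reals (0, ∞) such that ∫ (1/λ) dν(λ) < ∞. Then the function h(s) = ∫ s/(λ − s) dν(λ) is strictly increasing on (−∞, 0). Consequently, the marginalized posterior p(Z = 1 | t) = 1 + ∫ s_c/(λ₁ − s_c) dν(λ₁) is a strictly increasing function of the commission outlier score s_c ∈ (−∞, 0). -/

import Mathlib

open MeasureTheory

private lemma comm_integrable (ν : Measure ℝ) [IsProbabilityMeasure ν]
    (hsupp : ν (Set.Ioi (0 : ℝ))ᶜ = 0) (hint : Integrable (fun lam : ℝ => 1 / lam) ν)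
    {s : ℝ} (hs : s < 0) : Integrable (fun lam : ℝ => s / (lam - s)) ν := by
  have hae : ∀ᵐ lam ∂ν, lam ∈ Set.Ioi (0 : ℝ) := by
    rw [MeasureTheory.ae_iff]
    exact hsupp
  refine Integrable.mono' (hint.const_mul (-s)) ?_ ?_
  · exact (Measurable.div measurable_const (measurable_id.sub_const s)).aestronglyMeasurable
  · filter_upwards [hae] with lam hlam
    have hl : (0:ℝ) < lam := hlam
    have hls : (0:ℝ) < lam - s := by linarith
    have : |s / (lam - s)| = (-s) / (lam - s) := by
      rw [abs_div, abs_of_pos hls, abs_of_neg hs]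
    rw [Real.norm_eq_abs, this, mul_one_div]
    exact div_le_div_of_nonneg_left (by linarith) hl (by linarith)

/-- Let `ν` be a probability measure on the positive reals `(0, ∞)` with `∫ (1/λ) dν(λ) < ∞`.
Then `h s = ∫ s / (λ - s) dν(λ)` is strictly increasing on `(-∞, 0)`; consequently the
marginalized posterior `1 + ∫ s / (λ - s) dν(λ)` is a strictly increasing function of the
commission outlier score `s ∈ (-∞, 0)`. -/
theorem commission_posterior_strictMono (ν : Measure ℝ) [IsProbabilityMeasure ν]
    (hsupp : ν (Set.Ioi (0 : ℝ))ᶜ = 0) (hint : Integrable (fun lam : ℝ => 1 / lam) ν) :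
    StrictMonoOn (fun s : ℝ => ∫ lam, s / (lam - s) ∂ν) (Set.Iio 0) ∧
      StrictMonoOn (fun s : ℝ => 1 + ∫ lam, s / (lam - s) ∂ν) (Set.Iio 0) := by
  have hae : ∀ᵐ lam ∂ν, lam ∈ Set.Ioi (0 : ℝ) := by
    rw [MeasureTheory.ae_iff]
    exact hsupp
  have key : StrictMonoOn (fun s : ℝ => ∫ lam, s / (lam - s) ∂ν) (Set.Iio 0) := by
    intro s1 hs1 s2 hs2 h12
    have hs1' : s1 < 0 := hs1
    have hs2' : s2 < 0 := hs2
    have hi1 := comm_integrable ν hsupp hint hs1'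
    have hi2 := comm_integrable ν hsupp hint hs2'
    have hsub : Integrable (fun lam : ℝ => s2 / (lam - s2) - s1 / (lam - s1)) ν := hi2.sub hi1
    have hnonneg : 0 ≤ᵐ[ν] fun lam : ℝ => s2 / (lam - s2) - s1 / (lam - s1) := by
      filter_upwards [hae] with lam hlam
      have hl : (0:ℝ) < lam := hlam
      have h1 : (0:ℝ) < lam - s1 := by linarith
      have h2 : (0:ℝ) < lam - s2 := by linarith
      have : s1 / (lam - s1) < s2 / (lam - s2) := by
        rw [div_lt_div_iff₀ h1 h2]
        nlinarith
      simp [sub_nonneg]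
      exact le_of_lt this
    have hpos : 0 < ∫ lam, (s2 / (lam - s2) - s1 / (lam - s1)) ∂ν := by
      rw [(integral_pos_iff_support_of_nonneg_ae hnonneg hsub)]
      have hsub2 : Set.Ioi (0:ℝ) ⊆ Function.support fun lam : ℝ => s2 / (lam - s2) - s1 / (lam - s1) := by
        intro lam hlam
        have hl : (0:ℝ) < lam := hlam
        have h1 : (0:ℝ) < lam - s1 := by linarith
        have h2 : (0:ℝ) < lam - s2 := by linarith
        have : s1 / (lam - s1) < s2 / (lam - s2) := by
          rw [div_lt_div_iff₀ h1 h2]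
          nlinarith
        simp only [Function.mem_support]
        intro h
        have := sub_eq_zero.mp h
        linarith
      calc (0:ENNReal) < 1 := by norm_num
        _ = ν (Set.Ioi 0) := by
            have := measure_add_measure_compl (μ := ν) (s := Set.Ioi (0:ℝ)) measurableSet_Ioi
            rw [hsupp, add_zero] at this
            rw [this, measure_univ]
        _ ≤ _ := measure_mono hsub2
    have := integral_sub hi2 hi1
    rw [this] at hpos
    simp only []
    linarith
  refine ⟨key, ?_⟩
  intro s1 hs1 s2 hs2 h12
  have := key hs1 hs2 h12
  simpa using this
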